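/- Let ν : ℝ³ → ℝ be measurable with ν₀(1+|v|) ≤ ν(v) ≤ ν₁(1+|v|) for constants ν₀, ν₁ > 0, and let M(v) = (2π)^{−3/2} e^{−|v|²/2}, χ₀ = √M, χ_j = v_j√M (j = 1,2,3), χ₄ = (|v|² − 3)√M/√6. Then there exists C > 0 depending only on ν₀, ν₁ such that for every ε ∈ [0,1], ξ ∈ ℝ³, δ > 0, λ ∈ ℂ with Re λ ≥ −ν₀ + δ, and every j ∈ {0, 1, 2, 3, 4}: ( ∫_{ℝ³} |χ_j(v)|² / |λ + ν(v) + iε v·ξ|² dv )^{1/2} ≤ C δ^{−1/2} (1 + ε|ξ|)^{−1/2}. -/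

import Mathlib

noncomputable section

set_option maxHeartbeats 1000000

open MeasureTheory

/-- The normalized global Maxwellian `M(v) = (2π)^{−3/2} e^{−|v|²/2}` on `ℝ³`. -/
def Mx (v : EuclideanSpace ℝ (Fin 3)) : ℝ :=
  (2 * Real.pi) ^ (-(3:ℝ)/2) * Real.exp (-‖v‖^2 / 2)

/-- The five basis functions `χ₀ = √M`, `χ_j = v_j √M` (`j = 1,2,3`),
`χ₄ = (|v|² − 3)√M/√6`. -/
def chiB (k : Fin 5) (v : EuclideanSpace ℝ (Fin 3)) : ℝ :=
  if k.val = 0 then Real.sqrt (Mx v)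
  else if k.val = 4 then (‖v‖^2 - 3) * Real.sqrt (Mx v) / Real.sqrt 6
  else v ⟨(k.val - 1) % 3, by omega⟩ * Real.sqrt (Mx v)

section Aux

lemma Mx_nonneg (v : EuclideanSpace ℝ (Fin 3)) : 0 ≤ Mx v := by
  unfold Mx; positivity

lemma Mx_le (v : EuclideanSpace ℝ (Fin 3)) : Mx v ≤ Real.exp (-‖v‖^2 / 2) := by
  unfold Mx
  have h1 : (2 * Real.pi) ^ (-(3:ℝ)/2) ≤ 1 := by
    apply Real.rpow_le_one_of_one_le_of_nonpos
    · nlinarith [Real.pi_gt_three]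
    · norm_num
  nlinarith [Real.exp_pos (-‖v‖^2 / 2), Real.rpow_nonneg (by positivity : (0:ℝ) ≤ 2 * Real.pi) (-(3:ℝ)/2)]

lemma coord_sq_le (v : EuclideanSpace ℝ (Fin 3)) (i : Fin 3) : v i ^ 2 ≤ ‖v‖^2 := by
  have h : ‖v‖^2 = ∑ j, v j ^ 2 := by
    rw [EuclideanSpace.norm_eq, Real.sq_sqrt (by positivity)]
    simp [sq_abs]
  rw [h]
  exact Finset.single_le_sum (f := fun j => v j ^ 2) (fun j _ => sq_nonneg _) (Finset.mem_univ i)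

lemma one_add_sq_le (x : ℝ) (hx : 0 ≤ x) : (1 + x)^2 ≤ 64 * Real.exp (x/4) := by
  have h1 : (1 + x/8) ≤ Real.exp (x/8) := by
    have := Real.add_one_le_exp (x/8); linarith
  have h2 : (1 + x/8)^2 ≤ Real.exp (x/8) ^ 2 := by
    apply pow_le_pow_left₀ (by linarith) h1
  have h3 : Real.exp (x/8) ^ 2 = Real.exp (x/4) := by
    rw [sq, ← Real.exp_add]; congr 1; ring
  nlinarith [h2, h3]

lemma chi_bound (j : Fin 5) (v : EuclideanSpace ℝ (Fin 3)) :
    chiB j v ^ 2 ≤ 96 * Real.exp (-‖v‖^2 / 4) := by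
  set x := ‖v‖^2 with hxdef
  have hx : 0 ≤ x := sq_nonneg _
  have hM : Real.sqrt (Mx v) ^ 2 = Mx v := Real.sq_sqrt (Mx_nonneg v)
  have key : chiB j v ^ 2 ≤ (3/2) * (1 + x)^2 * Mx v := by
    have hMx0 := Mx_nonneg v
    fin_cases j
    · simp only [chiB, Fin.val_zero, if_true, hM]
      nlinarith [mul_nonneg hMx0 hx, mul_nonneg hMx0 (sq_nonneg x)]
    · simp only [chiB]; norm_num
      rw [mul_pow, hM]
      have := coord_sq_le v 0
      rw [← hxdef] at this
      nlinarith [mul_nonneg hMx0 hx, mul_nonneg hMx0 (sq_nonneg x),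
        mul_nonneg (sub_nonneg.mpr this) hMx0]
    · simp only [chiB]; norm_num
      rw [mul_pow, hM]
      have := coord_sq_le v 1
      rw [← hxdef] at this
      nlinarith [mul_nonneg hMx0 hx, mul_nonneg hMx0 (sq_nonneg x),
        mul_nonneg (sub_nonneg.mpr this) hMx0]
    · simp only [chiB]; norm_num
      rw [mul_pow, hM]
      have := coord_sq_le v ⟨(3 - 1) % 3, by omega⟩
      rw [← hxdef] at this
      nlinarith [mul_nonneg hMx0 hx, mul_nonneg hMx0 (sq_nonneg x),
        mul_nonneg (sub_nonneg.mpr this) hMx0]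
    · simp only [chiB]; norm_num
      rw [div_pow, mul_pow, hM, Real.sq_sqrt (by norm_num : (0:ℝ) ≤ 6)]
      rw [div_le_iff₀ (by norm_num : (0:ℝ) < 6), ← hxdef]
      nlinarith [mul_nonneg hMx0 hx, mul_nonneg hMx0 (sq_nonneg x)]
  have h2 : (3/2 : ℝ) * (1 + x)^2 * Mx v ≤ (3/2) * (64 * Real.exp (x/4)) * Real.exp (-x / 2) := by
    have := one_add_sq_le x hx
    have hMle := Mx_le v
    have hMx0 := Mx_nonneg v
    have he : (0:ℝ) < Real.exp (x/4) := Real.exp_pos _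
    rw [← hxdef] at hMle
    nlinarith [Real.exp_pos (-x/2)]
  have h3 : (3/2 : ℝ) * (64 * Real.exp (x/4)) * Real.exp (-x / 2) = 96 * Real.exp (-x/4) := by
    rw [show (3/2 : ℝ) * (64 * Real.exp (x/4)) * Real.exp (-x / 2)
        = 96 * (Real.exp (x/4) * Real.exp (-x/2)) by ring, ← Real.exp_add]
    congr 2; ring
  linarith [key, h2, h3.le]

/-- Gaussian is integrable on ℝ. -/
lemma gauss1d : Integrable (fun t : ℝ => Real.exp (-t^2/4)) := by
  have h := integrable_exp_neg_mul_sq (show (0:ℝ) < 1/4 by norm_num)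
  convert h using 2 with t
  ring_nf

/-- Gaussian is integrable on 3D Euclidean space. -/
lemma gauss3d : Integrable (fun v : EuclideanSpace ℝ (Fin 3) => Real.exp (-‖v‖^2/4)) := by
  have hmp := (EuclideanSpace.volume_preserving_symm_measurableEquiv_toLp (Fin 3)).symm
  rw [← hmp.integrable_comp_emb (MeasurableEquiv.measurableEmbedding _)]
  have : ((fun v : EuclideanSpace ℝ (Fin 3) => Real.exp (-‖v‖^2/4)) ∘
      (MeasurableEquiv.toLp 2 (Fin 3 → ℝ)))
      = fun x : Fin 3 → ℝ => ∏ i, Real.exp (-(x i)^2/4) := by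
    funext x
    simp only [Function.comp_apply, EuclideanSpace.norm_eq]
    rw [Real.sq_sqrt (by positivity), ← Real.exp_sum]
    congr 1
    rw [← Finset.sum_div, ← Finset.sum_neg_distrib]
    congr 1
    apply Finset.sum_congr rfl
    intro i _
    simp [sq_abs]
  rw [MeasurableEquiv.symm_symm, this]
  exact Integrable.fintype_prod (f := fun _ : Fin 3 => fun t : ℝ => Real.exp (-t^2/4))
    (fun _ => gauss1d)

end Aux

theorem stmt13 (ν₀ ν₁ : ℝ) (hν₀ : 0 < ν₀) (hν₁ : 0 < ν₁) :
    ∃ C > (0:ℝ),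
      ∀ ν : EuclideanSpace ℝ (Fin 3) → ℝ, Measurable ν →
        (∀ v, ν₀ * (1 + ‖v‖) ≤ ν v ∧ ν v ≤ ν₁ * (1 + ‖v‖)) →
        ∀ ε ∈ Set.Icc (0:ℝ) 1, ∀ ξ : EuclideanSpace ℝ (Fin 3), ∀ δ : ℝ, 0 < δ →
        ∀ lam : ℂ, -ν₀ + δ ≤ lam.re → ∀ j : Fin 5,
          Real.sqrt (∫ v : EuclideanSpace ℝ (Fin 3),
              (chiB j v)^2 /
                (‖(lam + (ν v : ℂ) +
                  Complex.I * ((ε * (inner ℝ v ξ : ℝ) : ℝ) : ℂ))‖)^2)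
            ≤ C * δ ^ (-(1:ℝ)/2) * (1 + ε * ‖ξ‖) ^ (-(1:ℝ)/2) := by
  classical
  set vol1 : ℝ := (volume (Metric.ball (0 : EuclideanSpace ℝ (Fin 3)) 1)).toReal with hvol1def
  set A1 : ℝ := ∫ t : ℝ, Real.exp (-t^2/4) with hA1def
  set A2 : ℝ := ∫ y in Set.Ioi (0:ℝ), y * Real.exp (-y^2/4) with hA2def
  set W : ℝ := 288 * vol1 * A2 / ν₀ with hWdef
  set P : ℝ := 96 * Real.pi * A1^2 with hPdef
  set B : ℝ := 2*W + 2*P + 1 with hBdef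
  have hA1 : 0 ≤ A1 := integral_nonneg fun t => Real.exp_nonneg _
  have hA2 : 0 ≤ A2 := setIntegral_nonneg measurableSet_Ioi fun y hy =>
    mul_nonneg (le_of_lt hy) (Real.exp_nonneg _)
  have hvol1 : 0 ≤ vol1 := ENNReal.toReal_nonneg
  have hW : 0 ≤ W := by rw [hWdef]; positivity
  have hP : 0 ≤ P := by rw [hPdef]; positivity
  have hB1 : (1:ℝ) ≤ B := by rw [hBdef]; linarith
  have hB0 : (0:ℝ) < B := by linarith
  refine ⟨Real.sqrt B, Real.sqrt_pos.mpr hB0, ?_⟩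
  intro ν hνm hνb ε hε ξ δ hδ lam hlam j
  set s : ℝ := ε * ‖ξ‖ with hsdef
  have hs0 : 0 ≤ s := mul_nonneg hε.1 (norm_nonneg _)
  have h1s : (0:ℝ) < 1 + s := by linarith
  set f : EuclideanSpace ℝ (Fin 3) → ℝ := fun v =>
    (chiB j v)^2 / (‖(lam + (ν v : ℂ) +
      Complex.I * ((ε * (inner ℝ v ξ : ℝ) : ℝ) : ℂ))‖)^2 with hfdef
  have hfnn : ∀ v, 0 ≤ f v := fun v => div_nonneg (sq_nonneg _) (sq_nonneg _)
  have habs : ∀ v : EuclideanSpace ℝ (Fin 3), (‖(lam + (ν v : ℂ) +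
      Complex.I * ((ε * (inner ℝ v ξ : ℝ) : ℝ) : ℂ))‖)^2
      = (lam.re + ν v)^2 + (lam.im + ε * (inner ℝ v ξ : ℝ))^2 := by
    intro v
    rw [Complex.sq_norm, Complex.normSq_apply]
    simp only [Complex.add_re, Complex.add_im, Complex.mul_re, Complex.mul_im,
      Complex.I_re, Complex.I_im, Complex.ofReal_re, Complex.ofReal_im]
    ring
  have hfle : ∀ v : EuclideanSpace ℝ (Fin 3), f v
      = (chiB j v)^2 / ((lam.re + ν v)^2 + (lam.im + ε * (inner ℝ v ξ : ℝ))^2) := by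
    intro v
    simp only [hfdef]
    rw [habs v]
  have ha : ∀ v : EuclideanSpace ℝ (Fin 3), δ + ν₀ * ‖v‖ ≤ lam.re + ν v := by
    intro v
    have h := (hνb v).1
    nlinarith
  have main : (∫ v : EuclideanSpace ℝ (Fin 3), f v) ≤ B / (δ * (1+s)) := by
    rcases le_or_gt s 1 with hs1 | hs1
    · -- small frequency case
      set F0 : ℝ → ℝ := fun y => 96 * Real.exp (-y^2/4) / (δ*(δ+ν₀*y)) with hF0def
      have hdenpos : ∀ y : ℝ, 0 ≤ y → 0 < δ * (δ + ν₀ * y) := fun y hy =>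
        mul_pos hδ (by nlinarith)
      have key1 : ∀ v : EuclideanSpace ℝ (Fin 3), f v ≤ F0 ‖v‖ := by
        intro v
        rw [hfle v]
        simp only [hF0def]
        apply div_le_div₀ (by positivity) (chi_bound j v) (hdenpos _ (norm_nonneg v))
        have h := ha v
        nlinarith [sq_nonneg (lam.im + ε * (inner ℝ v ξ : ℝ)), norm_nonneg v,
          mul_nonneg hν₀.le (norm_nonneg v)]
      have hF0meas : Measurable fun v : EuclideanSpace ℝ (Fin 3) => F0 ‖v‖ := by
        simp only [hF0def]
        apply Measurable.div
        · exact (measurable_norm.pow_const 2).neg.div_const 4 |>.exp.const_mul 96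
        · exact (measurable_norm.const_mul ν₀ |>.const_add δ).const_mul δ
      have hF0int : Integrable fun v : EuclideanSpace ℝ (Fin 3) => F0 ‖v‖ := by
        apply Integrable.mono' (gauss3d.const_mul (96/δ^2)) hF0meas.aestronglyMeasurable
        filter_upwards with v
        have h0 : 0 ≤ F0 ‖v‖ := by
          simp only [hF0def]
          exact div_nonneg (by positivity) (hdenpos _ (norm_nonneg v)).le
        rw [Real.norm_eq_abs, abs_of_nonneg h0]
        simp only [hF0def]
        have h1 : 96 * Real.exp (-‖v‖^2/4) / (δ*(δ+ν₀*‖v‖)) ≤ 96 * Real.exp (-‖v‖^2/4) / (δ*δ) :=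
          div_le_div_of_nonneg_left (by positivity) (by positivity)
            (by nlinarith [mul_nonneg hν₀.le (norm_nonneg v)])
        refine h1.trans (le_of_eq ?_)
        field_simp
      have hrad : (∫ v : EuclideanSpace ℝ (Fin 3), F0 ‖v‖)
          = 3 * (vol1 * ∫ y in Set.Ioi (0:ℝ), y ^ (2:ℕ) * F0 y) := by
        rw [integral_fun_norm_addHaar volume F0, finrank_euclideanSpace_fin]
        rw [hvol1def]
        norm_num [nsmul_eq_mul, smul_eq_mul, Measure.real]
      have hA2int : IntegrableOn (fun y : ℝ => y * Real.exp (-y^2/4)) (Set.Ioi 0) := by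
        have h := integrableOn_rpow_mul_exp_neg_mul_sq (show (0:ℝ) < 1/4 by norm_num)
          (show (-1:ℝ) < 1 by norm_num)
        apply h.congr_fun ?_ measurableSet_Ioi
        intro y hy
        simp only [Real.rpow_one]
        congr 1
        ring
      have hmaj : IntegrableOn (fun y : ℝ => (96/(δ*ν₀)) * (y * Real.exp (-y^2/4)))
          (Set.Ioi 0) := hA2int.const_mul _
      have hptw : ∀ y ∈ Set.Ioi (0:ℝ), y ^ (2:ℕ) * F0 y
          ≤ (96/(δ*ν₀)) * (y * Real.exp (-y^2/4)) := by
        intro y hy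
        have hy0 : (0:ℝ) < y := hy
        simp only [hF0def]
        rw [mul_div_assoc', div_le_iff₀ (hdenpos y hy0.le)]
        have he : (0:ℝ) ≤ Real.exp (-y^2/4) := Real.exp_nonneg _
        have expand : 96/(δ*ν₀)*(y*Real.exp (-y^2/4))*(δ*(δ+ν₀*y))
            = 96*y*Real.exp (-y^2/4)*δ/ν₀ + 96*y^2*Real.exp (-y^2/4) := by
          field_simp
        rw [expand]
        have : 0 ≤ 96*y*Real.exp (-y^2/4)*δ/ν₀ := by positivity
        nlinarith
      have hLHSint : IntegrableOn (fun y : ℝ => y ^ (2:ℕ) * F0 y) (Set.Ioi 0) := by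
        apply Integrable.mono' hmaj ?_ ?_
        · apply Measurable.aestronglyMeasurable
          apply (measurable_id.pow_const 2).mul
          simp only [hF0def]
          apply Measurable.div
          · exact (measurable_id.pow_const 2).neg.div_const 4 |>.exp.const_mul 96
          · exact (measurable_id.const_mul ν₀ |>.const_add δ).const_mul δ
        · rw [ae_restrict_iff' measurableSet_Ioi]
          filter_upwards with y hy
          have h0 : 0 ≤ y ^ (2:ℕ) * F0 y := by
            simp only [hF0def]
            have := hdenpos y (le_of_lt hy)
            positivity
          rw [Real.norm_eq_abs, abs_of_nonneg h0]
          exact hptw y hy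
      have hset : (∫ y in Set.Ioi (0:ℝ), y ^ (2:ℕ) * F0 y) ≤ (96/(δ*ν₀)) * A2 := by
        have h := setIntegral_mono_on hLHSint hmaj measurableSet_Ioi hptw
        rwa [integral_const_mul, ← hA2def] at h
      calc (∫ v : EuclideanSpace ℝ (Fin 3), f v)
          ≤ ∫ v : EuclideanSpace ℝ (Fin 3), F0 ‖v‖ :=
            integral_mono_of_nonneg (Filter.Eventually.of_forall hfnn) hF0int
              (Filter.Eventually.of_forall key1)
        _ = 3 * (vol1 * ∫ y in Set.Ioi (0:ℝ), y ^ (2:ℕ) * F0 y) := hrad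
        _ ≤ 3 * (vol1 * ((96/(δ*ν₀)) * A2)) := by
            have hsi : 0 ≤ ∫ y in Set.Ioi (0:ℝ), y ^ (2:ℕ) * F0 y := by
              apply setIntegral_nonneg measurableSet_Ioi
              intro y hy
              simp only [hF0def]
              have := hdenpos y (le_of_lt hy)
              positivity
            nlinarith [hset, hvol1]
        _ = W / δ := by
            rw [hWdef]
            field_simp
            ring
        _ ≤ B / (δ * (1+s)) := by
            rw [div_le_div_iff₀ hδ (by positivity)]
            have h2 : W * (1+s) ≤ 2 * W := by nlinarith
            nlinarith [mul_nonneg hW hδ.le, mul_pos hδ h1s, hP]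
    · -- large frequency case
      have hsp : (0:ℝ) < s := lt_trans one_pos hs1
      have hξ0 : (0:ℝ) < ‖ξ‖ := by
        rcases (norm_nonneg ξ).eq_or_lt with h | h
        · exfalso
          rw [hsdef, ← h, mul_zero] at hsp
          exact lt_irrefl 0 hsp
        · exact h
      set u : EuclideanSpace ℝ (Fin 3) := ‖ξ‖⁻¹ • ξ with hudef
      have hξne : ξ ≠ 0 := fun h => by simp [h] at hξ0
      have hu : ‖u‖ = 1 := norm_smul_inv_norm hξne
      have hξu : ξ = ‖ξ‖ • u := by
        rw [hudef, smul_smul, mul_inv_cancel₀ (ne_of_gt hξ0), one_smul]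
      have hON : Orthonormal ℝ (({0} : Set (Fin 3)).restrict fun _ : Fin 3 => u) := by
        constructor
        · intro i; exact hu
        · intro i j hij
          exfalso
          apply hij
          have hi := i.2
          have hj := j.2
          simp only [Set.mem_singleton_iff] at hi hj
          exact Subtype.ext (hi.trans hj.symm)
      obtain ⟨b, hb⟩ := hON.exists_orthonormalBasis_extension_of_card_eq
        (by simp [finrank_euclideanSpace_fin])
      have hb0 : b 0 = u := hb 0 rfl
      set T : (Fin 3 → ℝ) → EuclideanSpace ℝ (Fin 3) :=
        fun x => b.repr.symm ((MeasurableEquiv.toLp 2 (Fin 3 → ℝ)) x) with hTdef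
      have hTmp : MeasurePreserving T := by
        have := (b.measurePreserving_repr_symm).comp
          (EuclideanSpace.volume_preserving_symm_measurableEquiv_toLp (Fin 3)).symm
        simpa [Function.comp_def, hTdef] using this
      have hTemb : MeasurableEmbedding T := by
        have := (b.repr.symm.toHomeomorph.measurableEmbedding).comp
          ((MeasurableEquiv.toLp 2 (Fin 3 → ℝ)).measurableEmbedding)
        simpa [Function.comp_def, hTdef] using this
      have hTcoord : ∀ (x : Fin 3 → ℝ) (i : Fin 3),
          ((MeasurableEquiv.toLp 2 (Fin 3 → ℝ)) x) i = x i := fun x i => rfl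
      have hTn : ∀ x : Fin 3 → ℝ, ‖T x‖^2 = (x 0)^2 + (x 1)^2 + (x 2)^2 := by
        intro x
        simp only [hTdef]
        rw [LinearIsometryEquiv.norm_map, EuclideanSpace.norm_eq,
          Real.sq_sqrt (by positivity)]
        rw [Fin.sum_univ_three]
        simp [hTcoord, sq_abs]
      have hTi : ∀ x : Fin 3 → ℝ, (inner ℝ (T x) ξ : ℝ) = ‖ξ‖ * x 0 := by
        intro x
        conv_lhs => rw [hξu]
        rw [real_inner_smul_right]
        congr 1
        rw [← hb0, real_inner_comm, ← OrthonormalBasis.repr_apply_apply]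
        simp only [hTdef]
        rw [LinearIsometryEquiv.apply_symm_apply]
        exact hTcoord x 0
      set G : (Fin 3 → ℝ) → ℝ := fun x =>
        96 * (Real.exp (-(x 1)^2/4) * Real.exp (-(x 2)^2/4))
          / (δ^2 + (lam.im + s * x 0)^2) with hGdef
      have hGden : ∀ t : ℝ, (0:ℝ) < δ^2 + (lam.im + s * t)^2 := fun t => by positivity
      have hkey2 : ∀ x : Fin 3 → ℝ, f (T x) ≤ G x := by
        intro x
        rw [hfle (T x)]
        simp only [hGdef]
        apply div_le_div₀ (by positivity) ?_ (hGden (x 0)) ?_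
        · refine le_trans (chi_bound j (T x)) ?_
          have h96 : Real.exp (-(x 1)^2/4) * Real.exp (-(x 2)^2/4)
              = Real.exp (-((x 1)^2 + (x 2)^2)/4) := by
            rw [← Real.exp_add]
            congr 1
            ring
          rw [h96]
          have hmono : -‖T x‖^2/4 ≤ -((x 1)^2 + (x 2)^2)/4 := by
            rw [hTn x]
            nlinarith [sq_nonneg (x 0)]
          exact mul_le_mul_of_nonneg_left (Real.exp_le_exp.mpr hmono) (by norm_num)
        · rw [hTi x]
          have h := ha (T x)
          have hδa : δ ≤ lam.re + ν (T x) := by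
            nlinarith [norm_nonneg (T x), mul_nonneg hν₀.le (norm_nonneg (T x))]
          have him : ε * (‖ξ‖ * x 0) = s * x 0 := by rw [hsdef]; ring
          rw [him]
          nlinarith [hδa, hδ]
      set Ff : Fin 3 → ℝ → ℝ := fun i t =>
        if i = 0 then 96 / (δ^2 + (lam.im + s*t)^2) else Real.exp (-t^2/4) with hFfdef
      have hGprod : ∀ x : Fin 3 → ℝ, G x = ∏ i, Ff i (x i) := by
        intro x
        rw [Fin.prod_univ_three]
        simp only [hGdef, hFfdef, if_pos rfl, if_neg (show (1:Fin 3) ≠ 0 by decide),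
          if_neg (show (2:Fin 3) ≠ 0 by decide)]
        ring
      have hF0int : Integrable (Ff 0) := by
        simp only [hFfdef, if_pos rfl]
        have i1 : Integrable fun x : ℝ => (1+x^2)⁻¹ := integrable_inv_one_add_sq
        have i2 : Integrable fun x : ℝ => (1+(x/δ)^2)⁻¹ := i1.comp_div (ne_of_gt hδ)
        have i3 : Integrable fun x : ℝ => 96 / (δ^2 + x^2) := by
          have h := i2.const_mul (96/δ^2)
          have heq : (fun x : ℝ => 96/(δ^2+x^2)) = fun x => (96/δ^2) * (1+(x/δ)^2)⁻¹ := by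
            funext x
            rw [eq_comm]
            field_simp
          rw [heq]
          exact h
        have i4 : Integrable fun t : ℝ => 96 / (δ^2 + (lam.im + t)^2) := i3.comp_add_left lam.im
        exact i4.comp_mul_left' (ne_of_gt hsp)
      have hFint : ∀ i, Integrable (Ff i) := by
        intro i
        fin_cases i
        · exact hF0int
        · simp only [hFfdef, if_neg (show (1:Fin 3) ≠ 0 by decide)]
          exact gauss1d
        · simp only [hFfdef, if_neg (show (2:Fin 3) ≠ 0 by decide)]
          exact gauss1d
      have hGeq : G = fun x : Fin 3 → ℝ => ∏ i, Ff i (x i) := funext hGprod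
      have hGint : Integrable G := by
        rw [hGeq]
        exact Integrable.fintype_prod (f := Ff) hFint
      have hGval : (∫ x : Fin 3 → ℝ, G x) = (96 * Real.pi / (δ * s)) * (A1 * A1) := by
        rw [hGeq, integral_fintype_prod_volume_eq_prod (f := Ff), Fin.prod_univ_three]
        have h0 : (∫ t : ℝ, Ff 0 t) = 96 * Real.pi / (δ * s) := by
          simp only [hFfdef, if_pos rfl]
          have e1 : (∫ t : ℝ, 96 / (δ^2 + (lam.im + s*t)^2))
              = |s⁻¹| • ∫ t : ℝ, 96 / (δ^2 + (lam.im + t)^2) :=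
            Measure.integral_comp_mul_left (fun u => 96/(δ^2+(lam.im+u)^2)) s
          have e2 : (∫ t : ℝ, 96 / (δ^2 + (lam.im + t)^2)) = ∫ t : ℝ, 96 / (δ^2 + t^2) :=
            integral_add_left_eq_self (fun u => 96/(δ^2+u^2)) lam.im
          have e3 : (∫ t : ℝ, 96 / (δ^2 + t^2)) = (96/δ^2) * ∫ t : ℝ, (1+(t/δ)^2)⁻¹ := by
            rw [← integral_const_mul]
            congr 1
            funext t
            rw [eq_comm]
            field_simp
          have e4 : (∫ t : ℝ, (1+(t/δ)^2)⁻¹) = |δ| • ∫ t : ℝ, (1+t^2)⁻¹ :=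
            Measure.integral_comp_div (fun u => (1+u^2)⁻¹) δ
          rw [e1, e2, e3, e4, integral_univ_inv_one_add_sq, smul_eq_mul, smul_eq_mul,
            abs_of_pos (inv_pos.mpr hsp), abs_of_pos hδ]
          field_simp
        have h1 : (∫ t : ℝ, Ff 1 t) = A1 := by
          simp only [hFfdef, if_neg (show (1:Fin 3) ≠ 0 by decide)]
          rfl
        have h2 : (∫ t : ℝ, Ff 2 t) = A1 := by
          simp only [hFfdef, if_neg (show (2:Fin 3) ≠ 0 by decide)]
          rfl
        rw [h0, h1, h2]
        ring
      have hIT : (∫ v : EuclideanSpace ℝ (Fin 3), f v) = ∫ x : Fin 3 → ℝ, f (T x) :=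
        (hTmp.integral_comp hTemb f).symm
      rw [hIT]
      calc (∫ x : Fin 3 → ℝ, f (T x)) ≤ ∫ x : Fin 3 → ℝ, G x :=
            integral_mono_of_nonneg (Filter.Eventually.of_forall fun x => hfnn _) hGint
              (Filter.Eventually.of_forall hkey2)
        _ = (96 * Real.pi / (δ * s)) * (A1 * A1) := hGval
        _ ≤ B / (δ * (1+s)) := by
            rw [show (96 * Real.pi / (δ * s)) * (A1 * A1) = (96 * Real.pi * A1^2) / (δ * s) by
              field_simp]
            rw [div_le_div_iff₀ (by positivity) (by positivity)]
            have hBP : 2*P ≤ B := by rw [hBdef]; linarith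
            rw [← hPdef]
            nlinarith [mul_nonneg (mul_nonneg hP hδ.le) (by linarith : (0:ℝ) ≤ s - 1),
              mul_nonneg (by linarith : (0:ℝ) ≤ B - 2*P) (by positivity : (0:ℝ) ≤ δ * s)]
  have hsqrt := Real.sqrt_le_sqrt main
  refine le_trans hsqrt ?_
  rw [show B / (δ*(1+s)) = B * (δ⁻¹ * (1+s)⁻¹) by rw [div_eq_mul_inv, mul_inv]]
  rw [Real.sqrt_mul hB0.le, Real.sqrt_mul (by positivity), Real.sqrt_inv, Real.sqrt_inv]
  have hδr : δ ^ (-(1:ℝ)/2) = (Real.sqrt δ)⁻¹ := by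
    rw [show (-(1:ℝ)/2) = -(1/2 : ℝ) by norm_num, Real.rpow_neg hδ.le, Real.sqrt_eq_rpow]
  have hsr : (1+s) ^ (-(1:ℝ)/2) = (Real.sqrt (1+s))⁻¹ := by
    rw [show (-(1:ℝ)/2) = -(1/2 : ℝ) by norm_num, Real.rpow_neg h1s.le, Real.sqrt_eq_rpow]
  rw [hδr, hsr]
  exact le_of_eq (by ring)

end
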